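/- Let (μ, ω, λ) and (μ̃, ω̃, λ̃) be univariate skew normal parameters (ω, ω̃ > 0), with Δ = ω·λ/√(1+λ²), Γ = ω²/(1+λ²), and analogously Δ̃, Γ̃. Let MGF and M̃GF denote the corresponding skew normal moment generating functions MGF(t) = 2·exp(μt + t²ω²/2)·Φ(Δt) and M̃GF(t) = 2·exp(μ̃t + t²ω̃²/2)·Φ(Δ̃t). If Γ̃ − Γ > 0, then for every t ∈ ℝ with t ≠ 0 and Δ·t ≤ 0, lim_{c→∞} MGF(ct)/M̃GF(ct) = 0. -/

import Mathlib

open Filter MeasureTheory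

noncomputable section

/-- Standard normal cdf Φ. -/
def stdNormalCdf (x : ℝ) : ℝ :=
  ∫ u in Set.Iio x, (Real.sqrt (2 * Real.pi))⁻¹ * Real.exp (-(u ^ 2) / 2)

/-- The skew normal moment generating function of SN(μ, ω, λ),
with Δ = ω·λ/√(1+λ²). -/
def snMGF (μ ω lam : ℝ) (t : ℝ) : ℝ :=
  2 * Real.exp (μ * t + t ^ 2 * ω ^ 2 / 2) *
    stdNormalCdf (ω * lam / Real.sqrt (1 + lam ^ 2) * t)

/-- Standard normal pdf. -/
def gpdf (u : ℝ) : ℝ := (Real.sqrt (2 * Real.pi))⁻¹ * Real.exp (-(u ^ 2) / 2)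

lemma gpdf_pos (u : ℝ) : 0 < gpdf u := by
  unfold gpdf
  have h2π : (0:ℝ) < 2 * Real.pi := by positivity
  positivity

lemma integrable_gpdf : Integrable gpdf := by
  have h : Integrable (fun u : ℝ => Real.exp (-(1/2 : ℝ) * u ^ 2)) :=
    integrable_exp_neg_mul_sq (by norm_num)
  have h2 : Integrable (fun u : ℝ => Real.exp (-(u ^ 2) / 2)) := by
    have : (fun u : ℝ => Real.exp (-(u ^ 2) / 2))
        = fun u : ℝ => Real.exp (-(1/2 : ℝ) * u ^ 2) := by
      funext u; congr 1; ring
    rw [this]; exact h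
  exact h2.const_mul _

lemma integral_gpdf : ∫ u, gpdf u = 1 := by
  unfold gpdf
  rw [MeasureTheory.integral_const_mul]
  have h : ∫ u : ℝ, Real.exp (-(u ^ 2) / 2) = Real.sqrt (2 * Real.pi) := by
    have h1 := integral_gaussian (1/2 : ℝ)
    have h2 : (fun u : ℝ => Real.exp (-(u ^ 2) / 2))
        = fun u : ℝ => Real.exp (-(1/2 : ℝ) * u ^ 2) := by
      funext u; congr 1; ring
    rw [h2, h1]
    congr 1; ring
  rw [h, inv_mul_cancel₀ (by positivity)]

lemma stdNormalCdf_ge (y : ℝ) : gpdf (|y| + 1) ≤ stdNormalCdf y := by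
  have hcdf : stdNormalCdf y = ∫ u in Set.Iio y, gpdf u := rfl
  rw [hcdf]
  have hsub : Set.Ioo (y - 1) y ⊆ Set.Iio y := Set.Ioo_subset_Iio_self
  have h1 : ∫ _u in Set.Ioo (y - 1) y, gpdf (|y| + 1) ≤ ∫ u in Set.Ioo (y - 1) y, gpdf u := by
    apply setIntegral_mono_on
    · exact integrableOn_const (by simp [Real.volume_Ioo])
    · exact integrable_gpdf.integrableOn
    · exact measurableSet_Ioo
    · intro u hu
      unfold gpdf
      have hu' : |u| ≤ |y| + 1 := by
        rw [abs_le]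
        constructor
        · have := neg_abs_le y; linarith [hu.1]
        · have := le_abs_self y; linarith [hu.2.le]
      have hsq : u ^ 2 ≤ (|y| + 1) ^ 2 := by
        rw [← sq_abs u]
        exact pow_le_pow_left₀ (abs_nonneg u) hu' 2
      have : Real.exp (-((|y| + 1) ^ 2) / 2) ≤ Real.exp (-(u ^ 2) / 2) := by
        apply Real.exp_le_exp.mpr; linarith
      have hs : (0:ℝ) ≤ (Real.sqrt (2 * Real.pi))⁻¹ := by positivity
      exact mul_le_mul_of_nonneg_left this hs
  have h2 : ∫ u in Set.Ioo (y - 1) y, gpdf u ≤ ∫ u in Set.Iio y, gpdf u := by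
    apply setIntegral_mono_set integrable_gpdf.integrableOn
    · exact Filter.Eventually.of_forall fun u => (gpdf_pos u).le
    · exact Filter.Eventually.of_forall hsub
  have h0 : ∫ _u in Set.Ioo (y - 1) y, gpdf (|y| + 1) = gpdf (|y| + 1) := by
    rw [setIntegral_const, Real.volume_real_Ioo]
    simp
  linarith [h1, h2, h0.symm.le]

lemma stdNormalCdf_pos (y : ℝ) : 0 < stdNormalCdf y :=
  lt_of_lt_of_le (gpdf_pos _) (stdNormalCdf_ge y)

lemma stdNormalCdf_le (y : ℝ) (hy : y ≤ 0) : stdNormalCdf y ≤ Real.exp (-(y ^ 2) / 2) := by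
  have hcdf : stdNormalCdf y = ∫ u in Set.Iio y, gpdf u := rfl
  rw [hcdf]
  have hint : Integrable (fun u : ℝ => Real.exp (-(y ^ 2) / 2) * gpdf (u - y)) :=
    (integrable_gpdf.comp_sub_right y).const_mul _
  calc ∫ u in Set.Iio y, gpdf u
      ≤ ∫ u in Set.Iio y, Real.exp (-(y ^ 2) / 2) * gpdf (u - y) := by
        apply setIntegral_mono_on integrable_gpdf.integrableOn hint.integrableOn
          measurableSet_Iio
        intro u hu
        have hu' : u < y := hu
        unfold gpdf
        rw [← mul_assoc, mul_comm (Real.exp (-(y ^ 2) / 2)) _, mul_assoc]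
        apply mul_le_mul_of_nonneg_left _ (by positivity)
        rw [← Real.exp_add]
        apply Real.exp_le_exp.mpr
        nlinarith [mul_nonpos_of_nonpos_of_nonneg hy (by linarith : (0:ℝ) ≤ y - u)]
    _ ≤ ∫ u, Real.exp (-(y ^ 2) / 2) * gpdf (u - y) := by
        apply setIntegral_le_integral hint
        exact Filter.Eventually.of_forall fun u =>
          mul_nonneg (Real.exp_nonneg _) (gpdf_pos _).le
    _ = Real.exp (-(y ^ 2) / 2) := by
        rw [MeasureTheory.integral_const_mul, integral_sub_right_eq_self gpdf y,
          integral_gpdf, mul_one]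

theorem stmt11 (μ ω lam μ' ω' lam' : ℝ) (hω : 0 < ω) (hω' : 0 < ω')
    (hΓ : 0 < ω' ^ 2 / (1 + lam' ^ 2) - ω ^ 2 / (1 + lam ^ 2)) :
    ∀ t : ℝ, t ≠ 0 → ω * lam / Real.sqrt (1 + lam ^ 2) * t ≤ 0 →
      Tendsto (fun c : ℝ => snMGF μ ω lam (c * t) / snMGF μ' ω' lam' (c * t))
        atTop (nhds 0) := by
  intro t ht hΔt
  have h1l : (0:ℝ) < 1 + lam ^ 2 := by positivity
  have h1l' : (0:ℝ) < 1 + lam' ^ 2 := by positivity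
  obtain ⟨Δ, hΔdef⟩ : ∃ x : ℝ, ω * lam / Real.sqrt (1 + lam ^ 2) = x := ⟨_, rfl⟩
  obtain ⟨Δ', hΔ'def⟩ : ∃ x : ℝ, ω' * lam' / Real.sqrt (1 + lam' ^ 2) = x := ⟨_, rfl⟩
  obtain ⟨Γ, hΓdef⟩ : ∃ x : ℝ, ω ^ 2 / (1 + lam ^ 2) = x := ⟨_, rfl⟩
  obtain ⟨Γ', hΓ'def⟩ : ∃ x : ℝ, ω' ^ 2 / (1 + lam' ^ 2) = x := ⟨_, rfl⟩
  rw [hΔdef] at hΔt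
  rw [hΓdef, hΓ'def] at hΓ
  have hΔsq : Δ ^ 2 = ω ^ 2 * lam ^ 2 / (1 + lam ^ 2) := by
    rw [← hΔdef, div_pow, Real.sq_sqrt h1l.le, mul_pow]
  have hΔ'sq : Δ' ^ 2 = ω' ^ 2 * lam' ^ 2 / (1 + lam' ^ 2) := by
    rw [← hΔ'def, div_pow, Real.sq_sqrt h1l'.le, mul_pow]
  have hGam : ω ^ 2 - Δ ^ 2 = Γ := by
    rw [hΔsq, ← hΓdef]; field_simp; ring
  have hGam' : ω' ^ 2 - Δ' ^ 2 = Γ' := by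
    rw [hΔ'sq, ← hΓ'def]; field_simp; ring
  obtain ⟨a, hadef⟩ : ∃ x : ℝ, (μ - μ') * t + |Δ' * t| = x := ⟨_, rfl⟩
  obtain ⟨b, hbdef⟩ : ∃ x : ℝ, t ^ 2 * (Γ - Γ') / 2 = x := ⟨_, rfl⟩
  have hb : b < 0 := by
    have ht2 : (0:ℝ) < t ^ 2 := by positivity
    have hGG : Γ - Γ' < 0 := by linarith
    rw [← hbdef]
    have := mul_neg_of_pos_of_neg ht2 hGG
    linarith
  obtain ⟨s, hsdef⟩ : ∃ x : ℝ, Real.sqrt (2 * Real.pi) = x := ⟨_, rfl⟩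
  have hs : (0:ℝ) < s := by rw [← hsdef]; positivity
  -- the dominating function
  have hg : Tendsto (fun c : ℝ => s * Real.exp (b * c ^ 2 + a * c + 1/2)) atTop (nhds 0) := by
    have hq : Tendsto (fun c : ℝ => b * c ^ 2 + a * c + 1/2) atTop atBot := by
      have h1 : Tendsto (fun c : ℝ => b * c + a) atTop atBot := by
        apply tendsto_atBot_add_const_right
        exact tendsto_id.const_mul_atTop_of_neg hb
      have h2 : Tendsto (fun c : ℝ => c * (b * c + a)) atTop atBot :=
        tendsto_id.atTop_mul_atBot₀ h1
      have h3 : Tendsto (fun c : ℝ => c * (b * c + a) + 1/2) atTop atBot :=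
        tendsto_atBot_add_const_right _ _ h2
      refine h3.congr fun c => by ring
    have := (Real.tendsto_exp_atBot.comp hq).const_mul s
    simpa using this
  apply squeeze_zero' (g := fun c : ℝ => s * Real.exp (b * c ^ 2 + a * c + 1/2)) _ _ hg
  · exact Filter.Eventually.of_forall fun c =>
      div_nonneg
        (mul_nonneg (by positivity) (stdNormalCdf_pos _).le)
        (mul_nonneg (by positivity) (stdNormalCdf_pos _).le)
  · filter_upwards [eventually_ge_atTop (0:ℝ)] with c hc
    -- numerator upper bound
    have harg : Δ * (c * t) ≤ 0 := by
      rw [show Δ * (c * t) = c * (Δ * t) by ring]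
      exact mul_nonpos_of_nonneg_of_nonpos hc hΔt
    have hX : snMGF μ ω lam (c * t) ≤ 2 * Real.exp (μ * t * c + Γ * t ^ 2 * c ^ 2 / 2) := by
      unfold snMGF
      rw [hΔdef]
      calc 2 * Real.exp (μ * (c * t) + (c * t) ^ 2 * ω ^ 2 / 2) * stdNormalCdf (Δ * (c * t))
          ≤ 2 * Real.exp (μ * (c * t) + (c * t) ^ 2 * ω ^ 2 / 2) *
              Real.exp (-((Δ * (c * t)) ^ 2) / 2) :=
            mul_le_mul_of_nonneg_left (stdNormalCdf_le _ harg) (by positivity)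
        _ = 2 * Real.exp (μ * t * c + Γ * t ^ 2 * c ^ 2 / 2) := by
            rw [mul_assoc, ← Real.exp_add]
            congr 2
            linear_combination (c ^ 2 * t ^ 2 / 2) * hGam
    -- denominator lower bound
    have habs : |Δ' * (c * t)| = |Δ' * t| * c := by
      rw [show Δ' * (c * t) = Δ' * t * c by ring, abs_mul, abs_of_nonneg hc]
    have hY : 2 * s⁻¹ * Real.exp (μ' * t * c + Γ' * t ^ 2 * c ^ 2 / 2 - |Δ' * t| * c - 1/2)
        ≤ snMGF μ' ω' lam' (c * t) := by
      unfold snMGF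
      rw [hΔ'def]
      have key : 2 * s⁻¹ * Real.exp (μ' * t * c + Γ' * t ^ 2 * c ^ 2 / 2 - |Δ' * t| * c - 1/2)
          = 2 * Real.exp (μ' * (c * t) + (c * t) ^ 2 * ω' ^ 2 / 2) *
              gpdf (|Δ' * (c * t)| + 1) := by
        unfold gpdf
        rw [hsdef, habs]
        rw [show 2 * Real.exp (μ' * (c * t) + (c * t) ^ 2 * ω' ^ 2 / 2) *
            (s⁻¹ * Real.exp (-((|Δ' * t| * c + 1) ^ 2) / 2))
            = 2 * s⁻¹ * (Real.exp (μ' * (c * t) + (c * t) ^ 2 * ω' ^ 2 / 2) *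
              Real.exp (-((|Δ' * t| * c + 1) ^ 2) / 2)) by ring, ← Real.exp_add]
        congr 2
        linear_combination (-(c ^ 2 * t ^ 2) / 2) * hGam' + (c ^ 2 / 2) * sq_abs (Δ' * t)
      rw [key]
      exact mul_le_mul_of_nonneg_left (stdNormalCdf_ge _) (by positivity)
    have hYpos : 0 < 2 * s⁻¹ *
        Real.exp (μ' * t * c + Γ' * t ^ 2 * c ^ 2 / 2 - |Δ' * t| * c - 1/2) := by positivity
    have hdiv : snMGF μ ω lam (c * t) / snMGF μ' ω' lam' (c * t)
        ≤ (2 * Real.exp (μ * t * c + Γ * t ^ 2 * c ^ 2 / 2)) /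
          (2 * s⁻¹ * Real.exp (μ' * t * c + Γ' * t ^ 2 * c ^ 2 / 2 - |Δ' * t| * c - 1/2)) :=
      div_le_div₀ (by positivity) hX hYpos hY
    refine hdiv.trans_eq ?_
    rw [show b * c ^ 2 + a * c + 1/2
        = (μ * t * c + Γ * t ^ 2 * c ^ 2 / 2)
          - (μ' * t * c + Γ' * t ^ 2 * c ^ 2 / 2 - |Δ' * t| * c - 1/2) by
      rw [← hbdef, ← hadef]; ring]
    rw [eq_comm, eq_div_iff (ne_of_gt hYpos), Real.exp_sub]
    field_simp
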